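/- arXiv:2405.07811 — 2 statements merged into one kernel-verified Lean document; each statement's English description precedes it below -/
import Mathlib

section
/- The diagonal Gram coefficients can be computed by the recurrence a_{0,0} = (2T)^{−1/2} and a_{m+1, m+1} = ((2m+1)/(2m+2)) · a_{m,m} for all m ≥ 0. -/
open Real MeasureTheory Matrix Filter

/-- Physicists' Hermite polynomials: H_0 = 1, H_1 = 2x, H_{n+1} = 2x H_n - 2n H_{n-1}. -/
noncomputable def hermiteH : ℕ → ℝ → ℝ
  | 0, _ => 1
  | 1, x => 2 * x
  | (n + 2), x => 2 * x * hermiteH (n + 1) x - 2 * (n + 1) * hermiteH n x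

/-- Asymmetric Hermite basis function ψ_m. -/
noncomputable def psi (T : ℝ) (m : ℕ) (v : ℝ) : ℝ :=
  Real.exp (-v ^ 2 / T) * T ^ (-(1 : ℝ) / 2) *
    ((2 : ℝ) ^ m * (Nat.factorial m : ℝ) * Real.sqrt π) ^ (-(1 : ℝ) / 2) *
    hermiteH m (v / Real.sqrt T)

/-- Gram coefficient a_{m,n} = ∫ ψ_m ψ_n. -/
noncomputable def gramA (T : ℝ) (m n : ℕ) : ℝ := ∫ v : ℝ, psi T m v * psi T n v


open Topology Polynomial

noncomputable def Hp : ℕ → Polynomial ℝ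
  | 0 => 1
  | 1 => Polynomial.C 2 * Polynomial.X
  | (n + 2) => Polynomial.C 2 * Polynomial.X * Hp (n + 1)
      - Polynomial.C (2 * ((n : ℝ) + 1)) * Hp n


noncomputable def gw (x : ℝ) : ℝ := Real.exp (-2 * x ^ 2)

lemma gw_cont : Continuous gw := by
  unfold gw; continuity

lemma integrable_pow_gw (n : ℕ) : Integrable (fun x : ℝ => x ^ n * gw x) := by
  have h1 : Integrable (fun x : ℝ => Real.exp (-2 * x ^ 2)
      + (n.factorial : ℝ) * Real.exp (-1 * x ^ 2)) :=
    (integrable_exp_neg_mul_sq two_pos).add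
      ((integrable_exp_neg_mul_sq one_pos).const_mul _)
  refine h1.mono' ((continuous_pow n).mul gw_cont).aestronglyMeasurable ?_
  filter_upwards with x
  have hx2 : (0:ℝ) ≤ x ^ 2 := sq_nonneg x
  have hb : (x ^ 2) ^ n / (n.factorial : ℝ) ≤ Real.exp (x ^ 2) :=
    Real.pow_div_factorial_le_exp (x ^ 2) hx2 n
  have hfac : (0:ℝ) < (n.factorial : ℝ) := by positivity
  have habs : |x| ^ n ≤ 1 + (x ^ 2) ^ n := by
    rcases le_total (|x|) 1 with h | h
    · have : |x| ^ n ≤ 1 := pow_le_one₀ (abs_nonneg x) h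
      nlinarith [pow_nonneg (sq_nonneg x) n]
    · have : |x| ^ n ≤ (|x| ^ 2) ^ n := by
        rw [← pow_mul]
        exact pow_le_pow_right₀ h (by omega)
      rw [sq_abs] at this
      linarith
  have key : |x ^ n| * gw x ≤ Real.exp (-2 * x^2) + (n.factorial : ℝ) * Real.exp (-1 * x^2) := by
    have h2 : (x ^ 2) ^ n ≤ (n.factorial : ℝ) * Real.exp (x ^ 2) := by
      rw [div_le_iff₀ hfac] at hb; linarith [hb]
    have hgw : gw x = Real.exp (-2 * x ^ 2) := rfl
    have hexp : Real.exp (x ^ 2) * Real.exp (-2 * x ^ 2) = Real.exp (-1 * x ^ 2) := by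
      rw [← Real.exp_add]; ring_nf
    calc |x ^ n| * gw x = |x| ^ n * Real.exp (-2 * x ^ 2) := by rw [abs_pow, hgw]
      _ ≤ (1 + (n.factorial : ℝ) * Real.exp (x ^ 2)) * Real.exp (-2 * x ^ 2) := by
          apply mul_le_mul_of_nonneg_right _ (Real.exp_pos _).le
          nlinarith
      _ = Real.exp (-2 * x ^ 2) + (n.factorial : ℝ) * Real.exp (-1 * x ^ 2) := by
          rw [add_mul, one_mul, mul_assoc, hexp]
  calc ‖x ^ n * gw x‖ = |x ^ n| * gw x := by
        rw [norm_mul, Real.norm_eq_abs, Real.norm_eq_abs,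
          abs_of_pos (show (0:ℝ) < gw x from Real.exp_pos _)]
    _ ≤ _ := key

lemma integrable_pg (p : Polynomial ℝ) : Integrable (fun x : ℝ => p.eval x * gw x) := by
  induction p using Polynomial.induction_on' with
  | add p q hp hq =>
    refine (hp.add hq).congr ?_
    filter_upwards with x; simp [add_mul]
  | monomial n a =>
    refine ((integrable_pow_gw n).const_mul a).congr ?_
    filter_upwards with x; simp [mul_assoc]

lemma tendsto_pow_gw_top (n : ℕ) : Tendsto (fun x : ℝ => x ^ n * gw x) atTop (𝓝 0) := by
  have h := rpow_mul_exp_neg_mul_sq_isLittleO_exp_neg (two_pos) (n : ℝ)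
  have h2 : Tendsto (fun x : ℝ => Real.exp (-(1/2) * x)) atTop (𝓝 0) := by
    have := Real.tendsto_exp_atBot
    apply this.comp
    apply Tendsto.const_mul_atTop_of_neg (by norm_num) tendsto_id |>.mono_right le_rfl
  have h3 := h.isBigO.trans_tendsto h2
  refine h3.congr' ?_
  filter_upwards with x
  rw [Real.rpow_natCast]; rfl

lemma tendsto_pow_gw_bot (n : ℕ) : Tendsto (fun x : ℝ => x ^ n * gw x) atBot (𝓝 0) := by
  have h := ((tendsto_pow_gw_top n).comp tendsto_neg_atBot_atTop).const_mul ((-1 : ℝ) ^ n)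
  rw [mul_zero] at h
  refine h.congr ?_
  intro x
  show (-1 : ℝ) ^ n * ((-x) ^ n * gw (-x)) = x ^ n * gw x
  have : gw (-x) = gw x := by unfold gw; ring_nf
  rw [this, ← mul_assoc, ← mul_pow, neg_one_mul, neg_neg]

lemma tendsto_pg_top (p : Polynomial ℝ) :
    Tendsto (fun x : ℝ => p.eval x * gw x) atTop (𝓝 0) := by
  have h : ∀ x : ℝ, p.eval x * gw x
      = ∑ i ∈ Finset.range (p.natDegree + 1), p.coeff i * (x ^ i * gw x) := by
    intro x
    rw [Polynomial.eval_eq_sum_range, Finset.sum_mul]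
    congr 1; ext i; ring
  simp_rw [h]
  have := tendsto_finset_sum (Finset.range (p.natDegree + 1))
    (fun i _ => ((tendsto_pow_gw_top i).const_mul (p.coeff i)))
  simpa using this

lemma tendsto_pg_bot (p : Polynomial ℝ) :
    Tendsto (fun x : ℝ => p.eval x * gw x) atBot (𝓝 0) := by
  have h : ∀ x : ℝ, p.eval x * gw x
      = ∑ i ∈ Finset.range (p.natDegree + 1), p.coeff i * (x ^ i * gw x) := by
    intro x
    rw [Polynomial.eval_eq_sum_range, Finset.sum_mul]
    congr 1; ext i; ring
  simp_rw [h]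
  have := tendsto_finset_sum (Finset.range (p.natDegree + 1))
    (fun i _ => ((tendsto_pow_gw_bot i).const_mul (p.coeff i)))
  simpa using this

noncomputable def Ig (p : Polynomial ℝ) : ℝ := ∫ x : ℝ, p.eval x * gw x

lemma Ig_sub (p q : Polynomial ℝ) : Ig (p - q) = Ig p - Ig q := by
  unfold Ig
  rw [← integral_sub (integrable_pg p) (integrable_pg q)]
  congr 1; funext x; simp [sub_mul]

lemma Ig_add (p q : Polynomial ℝ) : Ig (p + q) = Ig p + Ig q := by
  unfold Ig
  rw [← integral_add (integrable_pg p) (integrable_pg q)]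
  congr 1; funext x; simp [add_mul]

lemma Ig_Cmul (a : ℝ) (p : Polynomial ℝ) : Ig (Polynomial.C a * p) = a * Ig p := by
  unfold Ig
  rw [← MeasureTheory.integral_const_mul]
  congr 1; funext x; simp [mul_assoc]

lemma hasDerivAt_pgw (p : Polynomial ℝ) (x : ℝ) :
    HasDerivAt (fun x => p.eval x * gw x)
      ((derivative p - Polynomial.C 4 * Polynomial.X * p).eval x * gw x) x := by
  have h1 : HasDerivAt (fun x : ℝ => -2 * x ^ 2) (-4 * x) x := by
    have := (hasDerivAt_pow 2 x).const_mul (-2 : ℝ)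
    exact this.congr_deriv (by push_cast; ring)
  have h2 : HasDerivAt gw (gw x * (-4 * x)) x := h1.exp
  have h3 := (p.hasDerivAt x).mul h2
  refine h3.congr_deriv ?_
  simp only [Polynomial.eval_sub, Polynomial.eval_mul, Polynomial.eval_C, Polynomial.eval_X]
  ring

lemma Ig_deriv_sub_zero (p : Polynomial ℝ) :
    Ig (derivative p - Polynomial.C 4 * Polynomial.X * p) = 0 := by
  set q := derivative p - Polynomial.C 4 * Polynomial.X * p with hq
  have hint := integrable_pg q
  have hIoi : ∫ x in Set.Ioi (0:ℝ), q.eval x * gw x = 0 - (p.eval 0 * gw 0) :=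
    integral_Ioi_of_hasDerivAt_of_tendsto' (fun x _ => hasDerivAt_pgw p x)
      hint.integrableOn (tendsto_pg_top p)
  have hIic : ∫ x in Set.Iic (0:ℝ), q.eval x * gw x = (p.eval 0 * gw 0) - 0 :=
    integral_Iic_of_hasDerivAt_of_tendsto' (fun x _ => hasDerivAt_pgw p x)
      hint.integrableOn (tendsto_pg_bot p)
  have := intervalIntegral.integral_Iic_add_Ioi (b := (0:ℝ)) hint.integrableOn hint.integrableOn
  unfold Ig
  rw [← this, hIoi, hIic]; ring

lemma Ig_parts (p : Polynomial ℝ) :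
    Ig (derivative p) = Ig (Polynomial.C 4 * Polynomial.X * p) := by
  have h := Ig_deriv_sub_zero p
  rw [Ig_sub] at h; linarith

lemma Ig_half (p : Polynomial ℝ) :
    Ig (Polynomial.C 2 * Polynomial.X * p) = (1/2) * Ig (derivative p) := by
  rw [Ig_parts p, show Polynomial.C (4:ℝ) * Polynomial.X * p
    = Polynomial.C 2 * (Polynomial.C 2 * Polynomial.X * p) from by
      rw [show Polynomial.C (4:ℝ) = Polynomial.C 2 * Polynomial.C 2 from by rw [← Polynomial.C_mul]; norm_num]; ring,
    Ig_Cmul]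
  ring

lemma Hp_eval (n : ℕ) (x : ℝ) : (Hp n).eval x = hermiteH n x := by
  induction n using Nat.strong_induction_on with
  | _ n ih =>
    match n with
    | 0 => simp [Hp, hermiteH]
    | 1 => simp [Hp, hermiteH]
    | (n+2) =>
      show (Polynomial.C 2 * Polynomial.X * Hp (n + 1)
        - Polynomial.C (2 * ((n : ℝ) + 1)) * Hp n).eval x = _
      simp only [hermiteH, Polynomial.eval_sub, Polynomial.eval_mul, Polynomial.eval_C,
        Polynomial.eval_X, ih (n+1) (by omega), ih n (by omega)]

lemma Hp_deriv (n : ℕ) :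
    derivative (Hp (n + 1)) = Polynomial.C (2 * ((n : ℝ) + 1)) * Hp n := by
  induction n using Nat.strong_induction_on with
  | _ n ih =>
    match n with
    | 0 =>
      apply Polynomial.funext; intro x
      show (derivative (Polynomial.C 2 * Polynomial.X)).eval x = _
      simp [Hp]
    | 1 =>
      apply Polynomial.funext; intro x
      show (derivative (Polynomial.C 2 * Polynomial.X * Hp 1
        - Polynomial.C (2 * ((0:ℕ) + 1 : ℝ)) * Hp 0)).eval x = _
      simp [Hp]; ring
    | (n+2) =>
      have h1 := ih (n+1) (by omega)
      have h2 := ih n (by omega)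
      have e3 : Hp (n+3) = Polynomial.C 2 * Polynomial.X * Hp (n + 2)
          - Polynomial.C (2 * ((((n+1) : ℕ) : ℝ) + 1)) * Hp (n+1) := rfl
      have e2 : Hp (n+2) = Polynomial.C 2 * Polynomial.X * Hp (n + 1)
          - Polynomial.C (2 * ((n : ℝ) + 1)) * Hp n := rfl
      show derivative (Hp (n+3)) = _
      rw [e3]
      simp only [derivative_sub, derivative_mul, derivative_C, derivative_X, h1, h2]
      rw [e2]
      apply Polynomial.funext; intro x
      simp only [Polynomial.eval_add, Polynomial.eval_sub, Polynomial.eval_mul,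
        Polynomial.eval_C, Polynomial.eval_X, Polynomial.eval_zero, Polynomial.eval_one]
      push_cast; ring

lemma Hp_deriv' (n : ℕ) :
    derivative (Hp n) = Polynomial.C (2 * (n : ℝ)) * Hp (n - 1) := by
  cases n with
  | zero => simp [Hp]
  | succ k => rw [Hp_deriv k]; push_cast; norm_num

lemma Ig_comm (a b : ℕ) : Ig (Hp a * Hp b) = Ig (Hp b * Hp a) := by rw [mul_comm]

lemma Ig_X_mul (a b : ℕ) :
    Ig (Polynomial.C 2 * Polynomial.X * (Hp a * Hp b))
      = (a : ℝ) * Ig (Hp (a-1) * Hp b) + (b : ℝ) * Ig (Hp a * Hp (b-1)) := by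
  rw [Ig_half, derivative_mul, Hp_deriv' a, Hp_deriv' b, Ig_add,
    show Polynomial.C (2 * (a : ℝ)) * Hp (a-1) * Hp b
      = Polynomial.C (2 * (a : ℝ)) * (Hp (a-1) * Hp b) from by ring,
    show Hp a * (Polynomial.C (2 * (b : ℝ)) * Hp (b-1))
      = Polynomial.C (2 * (b : ℝ)) * (Hp a * Hp (b-1)) from by ring,
    Ig_Cmul, Ig_Cmul]
  ring

lemma Hp_succ_succ (n : ℕ) : Hp (n + 2) = Polynomial.C 2 * Polynomial.X * Hp (n + 1)
      - Polynomial.C (2 * ((n : ℝ) + 1)) * Hp n := rfl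

lemma Ig_expand (m n : ℕ) :
    Ig (Hp (m+2) * Hp n)
      = Ig (Polynomial.C 2 * Polynomial.X * (Hp (m+1) * Hp n))
        - 2 * ((m:ℝ) + 1) * Ig (Hp m * Hp n) := by
  rw [Hp_succ_succ, sub_mul, Ig_sub, ← Ig_Cmul (2 * ((m:ℝ)+1)) (Hp m * Hp n), mul_assoc]
  ring_nf

noncomputable def Kg (m n : ℕ) : ℝ := Ig (Hp m * Hp n)

lemma Kg_main : ∀ m : ℕ, Kg (m+1) (m+1) = (2*(m:ℝ)+1) * Kg m m
    ∧ Kg (m+2) m = -(Kg (m+1) (m+1)) := by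
  intro m
  induction m with
  | zero =>
    have h11 : Kg 1 1 = Kg 0 0 := by
      show Ig (Hp 1 * Hp 1) = Ig (Hp 0 * Hp 0)
      have e : Hp 1 * Hp 1 = Polynomial.C 2 * Polynomial.X * (Hp 0 * Hp 1) := by
        show Polynomial.C 2 * Polynomial.X * (Polynomial.C 2 * Polynomial.X)
          = Polynomial.C 2 * Polynomial.X * (1 * (Polynomial.C 2 * Polynomial.X))
        ring
      rw [e, Ig_X_mul 0 1]
      norm_num
    have h20 : Kg 2 0 = -(Kg 1 1) := by
      simp only [Kg] at h11 ⊢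
      rw [show (2:ℕ) = 0+2 from rfl, Ig_expand 0 0, Ig_X_mul 1 0, h11]
      norm_num
      ring
    refine ⟨by rw [h11]; norm_num, h20⟩
  | succ n ih =>
    obtain ⟨ih1, ih2⟩ := ih
    have hA : Kg (n+2) (n+2) = (2*((n:ℝ)+1)+1) * Kg (n+1) (n+1) := by
      show Ig (Hp (n+2) * Hp (n+2)) = _
      rw [Ig_expand n (n+2), Ig_X_mul (n+1) (n+2)]
      simp only [Nat.add_sub_cancel]
      push_cast
      have c1 : Ig (Hp n * Hp (n+2)) = Kg (n+2) n := Ig_comm n (n+2)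
      have c2 : Ig (Hp (n+1) * Hp (n+1)) = Kg (n+1) (n+1) := rfl
      rw [c1, c2, ih2]
      ring
    refine ⟨by push_cast at hA ⊢; exact hA, ?_⟩
    show Ig (Hp (n+3) * Hp (n+1)) = -(Kg (n+2) (n+2))
    rw [show n+3 = (n+1)+2 from rfl, Ig_expand (n+1) (n+1), Ig_X_mul (n+2) (n+1)]
    simp only [Nat.add_sub_cancel]
    push_cast
    have c1 : Ig (Hp (n+2) * Hp n) = Kg (n+2) n := rfl
    have c2 : Ig (Hp (n+1) * Hp (n+1)) = Kg (n+1) (n+1) := rfl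
    rw [c1, c2, ih2, hA]
    ring

lemma rpow_half_sq {b : ℝ} (hb : 0 < b) : (b ^ (-(1:ℝ)/2))^2 = b⁻¹ := by
  rw [← Real.rpow_natCast (b ^ (-(1:ℝ)/2)) 2, ← Real.rpow_mul hb.le]
  norm_num
  exact Real.rpow_neg_one b

lemma gram_diag (T : ℝ) (hT : 0 < T) (m : ℕ) :
    gramA T m m = Real.sqrt T * T⁻¹ *
      ((2 : ℝ) ^ m * (Nat.factorial m : ℝ) * Real.sqrt π)⁻¹ * Kg m m := by
  have hsT : (0:ℝ) < Real.sqrt T := Real.sqrt_pos.mpr hT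
  set B : ℝ := (2 : ℝ) ^ m * (Nat.factorial m : ℝ) * Real.sqrt π with hB
  have hBpos : 0 < B := by
    have : (0:ℝ) < Real.sqrt π := Real.sqrt_pos.mpr Real.pi_pos
    positivity
  have key : ∀ v : ℝ, psi T m v * psi T m v
      = (fun u => (T ^ (-(1:ℝ)/2))^2 * (B ^ (-(1:ℝ)/2))^2 * ((Hp m).eval u ^ 2 * gw u))
          (v / Real.sqrt T) := by
    intro v
    simp only [psi, Hp_eval]
    have hsq : (v / Real.sqrt T) ^ 2 = v ^ 2 / T := by
      rw [div_pow, Real.sq_sqrt hT.le]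
    have hexp : Real.exp (-v ^ 2 / T) * Real.exp (-v ^ 2 / T) = gw (v / Real.sqrt T) := by
      rw [← Real.exp_add]
      unfold gw
      rw [hsq]
      ring_nf
    rw [← hB]
    calc Real.exp (-v ^ 2 / T) * T ^ (-(1:ℝ)/2) * B ^ (-(1:ℝ)/2) * hermiteH m (v / Real.sqrt T)
          * (Real.exp (-v ^ 2 / T) * T ^ (-(1:ℝ)/2) * B ^ (-(1:ℝ)/2) * hermiteH m (v / Real.sqrt T))
        = (T ^ (-(1:ℝ)/2))^2 * (B ^ (-(1:ℝ)/2))^2 * (hermiteH m (v / Real.sqrt T) ^ 2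
            * (Real.exp (-v ^ 2 / T) * Real.exp (-v ^ 2 / T))) := by ring
      _ = _ := by rw [hexp, ← Hp_eval]
  unfold gramA
  simp_rw [key]
  rw [MeasureTheory.Measure.integral_comp_div
    (fun u => (T ^ (-(1:ℝ)/2))^2 * (B ^ (-(1:ℝ)/2))^2 * ((Hp m).eval u ^ 2 * gw u)) (Real.sqrt T)]
  rw [abs_of_pos hsT, smul_eq_mul, MeasureTheory.integral_const_mul]
  have : (∫ u : ℝ, (Hp m).eval u ^ 2 * gw u) = Kg m m := by
    unfold Kg Ig
    congr 1; funext u; rw [Polynomial.eval_mul]; ring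
  rw [this, rpow_half_sq hT, rpow_half_sq hBpos]
  ring

theorem gramA_diag_recurrence (T : ℝ) (hT : 0 < T) :
    gramA T 0 0 = (2 * T) ^ (-(1 : ℝ) / 2) ∧
    ∀ m : ℕ, gramA T (m + 1) (m + 1) =
      ((2 * (m : ℝ) + 1) / (2 * (m : ℝ) + 2)) * gramA T m m := by
  have hsT : (0:ℝ) < Real.sqrt T := Real.sqrt_pos.mpr hT
  have hsπ : (0:ℝ) < Real.sqrt π := Real.sqrt_pos.mpr Real.pi_pos
  constructor
  · rw [gram_diag T hT 0]
    have hK : Kg 0 0 = Real.sqrt (π / 2) := by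
      unfold Kg Ig
      rw [← integral_gaussian 2]
      congr 1; funext x; simp [Hp, gw]
    rw [hK]
    have h1 : (2 * T) ^ (-(1:ℝ)/2) = (Real.sqrt (2 * T))⁻¹ := by
      rw [show (-(1:ℝ)/2) = -((1:ℝ)/2) from by norm_num,
        Real.rpow_neg (by positivity), Real.sqrt_eq_rpow]
    rw [h1, Real.sqrt_mul (by norm_num : (0:ℝ) ≤ 2),
      Real.sqrt_div Real.pi_pos.le 2]
    have e2 : Real.sqrt 2 * Real.sqrt 2 = 2 := Real.mul_self_sqrt (by norm_num)
    have eT : Real.sqrt T * Real.sqrt T = T := Real.mul_self_sqrt hT.le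
    have h2 : Real.sqrt 2 ≠ 0 := by positivity
    have h3 : Real.sqrt T ≠ 0 := ne_of_gt hsT
    have h4 : Real.sqrt π ≠ 0 := ne_of_gt hsπ
    have h5 : T ≠ 0 := ne_of_gt hT
    field_simp
    linear_combination eT
  · intro m
    rw [gram_diag T hT (m+1), gram_diag T hT m, (Kg_main m).1]
    have hfac : (Nat.factorial (m+1) : ℝ) = ((m:ℝ)+1) * (Nat.factorial m : ℝ) := by
      push_cast [Nat.factorial_succ]; ring
    rw [hfac, pow_succ]
    have hne1 : ((2:ℝ))^m ≠ 0 := by positivity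
    have hne2 : (Nat.factorial m : ℝ) ≠ 0 := by positivity
    have hne3 : Real.sqrt π ≠ 0 := ne_of_gt hsπ
    have hne4 : ((m:ℝ)+1) ≠ 0 := by positivity
    have hne5 : (2*(m:ℝ)+2) ≠ 0 := by positivity
    field_simp
end

section
/- For every m ≥ 1 and every l with 0 ≤ l ≤ m−1, the extra-diagonal Gram coefficients satisfy the recurrence starting from the diagonal: a_{m−l−1, m+l+1} = −√( (m−l)/(m+l+1) ) · a_{m−l, m+l}. -/
open Real MeasureTheory Matrix Filter

/-! ### Auxiliary lemmas -/

lemma hermiteH_succ (n : ℕ) (x : ℝ) :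
    hermiteH (n + 1) x = 2 * x * hermiteH n x - 2 * (n : ℝ) * hermiteH (n - 1) x := by
  cases n with
  | zero => simp [hermiteH]
  | succ k => simp [hermiteH]

/-- Polynomial version of the physicists' Hermite polynomials. -/
noncomputable def physP : ℕ → Polynomial ℝ
  | 0 => 1
  | 1 => Polynomial.C 2 * Polynomial.X
  | (n + 2) => Polynomial.C 2 * Polynomial.X * physP (n + 1)
      - Polynomial.C (2 * ((n : ℝ) + 1)) * physP n

lemma hermiteH_eq_eval : ∀ (n : ℕ) (x : ℝ), hermiteH n x = (physP n).eval x
  | 0, x => by simp [hermiteH, physP]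
  | 1, x => by simp [hermiteH, physP]
  | (n + 2), x => by
      simp [hermiteH, physP, hermiteH_eq_eval (n + 1) x, hermiteH_eq_eval n x]

lemma hermiteH_hasDerivAt : ∀ (n : ℕ) (x : ℝ),
    HasDerivAt (fun y => hermiteH n y) (2 * (n : ℝ) * hermiteH (n - 1) x) x
  | 0, x => by
      simpa [hermiteH] using (hasDerivAt_const x (1 : ℝ))
  | 1, x => by
      have h : HasDerivAt (fun y : ℝ => 2 * y) 2 x := by
        simpa using (hasDerivAt_id x).const_mul (2 : ℝ)
      have : (fun y : ℝ => hermiteH 1 y) = fun y : ℝ => 2 * y := by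
        funext y; simp [hermiteH]
      rw [this]
      simpa [hermiteH] using h
  | (n + 2), x => by
      have h1 := hermiteH_hasDerivAt (n + 1) x
      have h2 := hermiteH_hasDerivAt n x
      have hx : HasDerivAt (fun y : ℝ => 2 * y) 2 x := by
        simpa using (hasDerivAt_id x).const_mul (2 : ℝ)
      have hmul := hx.mul h1
      have hfull := hmul.sub (h2.const_mul (2 * ((n : ℝ) + 1)))
      have hfun : (fun y : ℝ => hermiteH (n + 2) y)
          = fun y : ℝ => 2 * y * hermiteH (n + 1) y - 2 * ((n : ℝ) + 1) * hermiteH n y := by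
        funext y; simp [hermiteH]
      rw [hfun]
      refine hfull.congr_deriv ?_
      have hs : hermiteH (n + 1) x
          = 2 * x * hermiteH n x - 2 * (n : ℝ) * hermiteH (n - 1) x := hermiteH_succ n x
      simp only [Nat.add_sub_cancel, Nat.succ_sub_one]
      push_cast
      rw [hs]
      ring

lemma integrable_poly_gauss (R : Polynomial ℝ) {b : ℝ} (hb : 0 < b) :
    Integrable fun x : ℝ => R.eval x * Real.exp (-b * x ^ 2) := by
  induction R using Polynomial.induction_on' with
  | add p q hp hq => simpa [add_mul, Pi.add_def] using hp.add hq
  | monomial n a =>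
      have h : Integrable fun x : ℝ => x ^ n * Real.exp (-b * x ^ 2) := by
        have h' := integrable_rpow_mul_exp_neg_mul_sq hb
          (s := (n : ℝ)) (lt_of_lt_of_le neg_one_lt_zero (Nat.cast_nonneg n))
        simpa [Real.rpow_natCast] using h'
      have := h.const_mul a
      simpa [Polynomial.eval_monomial, mul_assoc] using this

/-- Integrability of the gaussian-weighted Hermite products. -/
lemma integrable_gauss_hermite (T : ℝ) (hT : 0 < T) (a b : ℕ) :
    Integrable fun v : ℝ =>
      Real.exp (-(2 / T) * v ^ 2) * (hermiteH a (v / Real.sqrt T) * hermiteH b (v / Real.sqrt T)) := by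
  have hb : (0 : ℝ) < 2 / T := by positivity
  have h := integrable_poly_gauss
    (((physP a * physP b).comp (Polynomial.C (Real.sqrt T)⁻¹ * Polynomial.X))) hb
  refine h.congr (Filter.Eventually.of_forall fun v => ?_)
  simp only [Polynomial.eval_comp, Polynomial.eval_mul, Polynomial.eval_C, Polynomial.eval_X]
  rw [hermiteH_eq_eval, hermiteH_eq_eval, div_eq_inv_mul]
  ring_nf

/-- The key integral recurrence: shifting one index up and the other down flips the sign. -/
lemma key_integral (T : ℝ) (hT : 0 < T) (r q : ℕ) :
    (∫ v : ℝ, Real.exp (-(2 / T) * v ^ 2)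
        * (hermiteH r (v / Real.sqrt T) * hermiteH (q + 1) (v / Real.sqrt T)))
      = - ∫ v : ℝ, Real.exp (-(2 / T) * v ^ 2)
        * (hermiteH (r + 1) (v / Real.sqrt T) * hermiteH q (v / Real.sqrt T)) := by
  set st := Real.sqrt T with hstdef
  have hst : 0 < st := Real.sqrt_pos.mpr hT
  have hst2 : st ^ 2 = T := Real.sq_sqrt hT.le
  set F1 : ℝ → ℝ := fun v => Real.exp (-(2 / T) * v ^ 2)
    * (hermiteH r (v / st) * hermiteH (q + 1) (v / st)) with hF1
  set F2 : ℝ → ℝ := fun v => Real.exp (-(2 / T) * v ^ 2)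
    * (hermiteH (r + 1) (v / st) * hermiteH q (v / st)) with hF2
  have hIntF1 : Integrable F1 := integrable_gauss_hermite T hT r (q + 1)
  have hIntF2 : Integrable F2 := integrable_gauss_hermite T hT (r + 1) q
  have hIntG : Integrable fun v : ℝ => Real.exp (-(2 / T) * v ^ 2)
      * (hermiteH r (v / st) * hermiteH q (v / st)) := integrable_gauss_hermite T hT r q
  have hderiv : ∀ v : ℝ, HasDerivAt
      (fun w : ℝ => Real.exp (-(2 / T) * w ^ 2) * (hermiteH r (w / st) * hermiteH q (w / st)))
      (-st⁻¹ * (F1 v + F2 v)) v := by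
    intro v
    have h1 : HasDerivAt (fun w : ℝ => -(2 / T) * w ^ 2) (-(2 / T) * (2 * v)) v := by
      have := (hasDerivAt_pow 2 v).const_mul (-(2 / T))
      simpa using this
    have hexp := h1.exp
    have hu : HasDerivAt (fun w : ℝ => w / st) st⁻¹ v := by
      simpa [div_eq_mul_inv] using (hasDerivAt_id v).mul_const st⁻¹
    have hr := (hermiteH_hasDerivAt r (v / st)).comp v hu
    have hq2 := (hermiteH_hasDerivAt q (v / st)).comp v hu
    simp only [Function.comp_def] at hr hq2
    have hprod := hr.mul hq2
    have hG := hexp.mul hprod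
    refine hG.congr_deriv ?_
    rw [hF1, hF2]
    simp only [Pi.mul_apply]
    rw [hermiteH_succ q (v / st), hermiteH_succ r (v / st)]
    rw [← hst2]
    field_simp
    ring
  have h0 : (∫ v : ℝ, -st⁻¹ * (F1 v + F2 v)) = 0 :=
    integral_eq_zero_of_hasDerivAt_of_integrable hderiv
      (((hIntF1.add hIntF2).const_mul (-st⁻¹))) hIntG
  rw [integral_const_mul, integral_add hIntF1 hIntF2] at h0
  have hne : -st⁻¹ ≠ 0 := by
    simp [hst.ne']
  have hsum : (∫ v, F1 v) + ∫ v, F2 v = 0 := by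
    rcases mul_eq_zero.mp h0 with h | h
    · exact absurd h hne
    · exact h
  linarith [hsum]

/-- Normalization coefficient. -/
noncomputable def dcoef (m : ℕ) : ℝ :=
  ((2 : ℝ) ^ m * (Nat.factorial m : ℝ) * Real.sqrt π) ^ (-(1 : ℝ) / 2)

lemma gramA_eq (T : ℝ) (a b : ℕ) :
    gramA T a b = (T ^ (-(1 : ℝ) / 2) * T ^ (-(1 : ℝ) / 2)) * (dcoef a * dcoef b)
      * ∫ v : ℝ, Real.exp (-(2 / T) * v ^ 2)
          * (hermiteH a (v / Real.sqrt T) * hermiteH b (v / Real.sqrt T)) := by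
  rw [gramA, ← integral_const_mul]
  congr 1
  funext v
  rw [psi, psi, dcoef, dcoef]
  have hE : Real.exp (-(2 / T) * v ^ 2) = Real.exp (-v ^ 2 / T) * Real.exp (-v ^ 2 / T) := by
    rw [← Real.exp_add]
    congr 1
    ring
  rw [hE]
  ring

lemma dcoef_shift (p q : ℕ) (hp : 1 ≤ p) :
    dcoef (p - 1) * dcoef (q + 1)
      = Real.sqrt ((p : ℝ) / ((q : ℝ) + 1)) * (dcoef p * dcoef q) := by
  obtain ⟨r, rfl⟩ := Nat.exists_eq_add_of_le hp
  simp only [Nat.add_sub_cancel_left, dcoef]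
  have hπ : 0 < Real.sqrt π := Real.sqrt_pos.mpr Real.pi_pos
  have hc : (0 : ℝ) < (((1 + r : ℕ) : ℝ)) := by positivity
  have hbase : ((2 : ℝ) ^ r * (Nat.factorial r : ℝ) * Real.sqrt π)
      * ((2 : ℝ) ^ (q + 1) * (Nat.factorial (q + 1) : ℝ) * Real.sqrt π)
      = (((q : ℝ) + 1) / (((1 + r : ℕ) : ℝ)))
        * (((2 : ℝ) ^ (1 + r) * (Nat.factorial (1 + r) : ℝ) * Real.sqrt π)
          * ((2 : ℝ) ^ q * (Nat.factorial q : ℝ) * Real.sqrt π)) := by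
    have h1 : (Nat.factorial (q + 1) : ℝ) = ((q : ℝ) + 1) * (Nat.factorial q : ℝ) := by
      rw [Nat.factorial_succ]; push_cast; ring
    have h2 : (Nat.factorial (1 + r) : ℝ) = (((1 + r : ℕ) : ℝ)) * (Nat.factorial r : ℝ) := by
      rw [Nat.add_comm 1 r, Nat.factorial_succ]; push_cast; ring
    have h3 : (2 : ℝ) ^ (q + 1) = 2 * 2 ^ q := by ring
    have h4 : (2 : ℝ) ^ (1 + r) = 2 * 2 ^ r := by rw [pow_add]; ring
    rw [h1, h2, h3, h4]
    field_simp
  rw [← Real.mul_rpow (by positivity) (by positivity), hbase,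
    Real.mul_rpow (by positivity) (by positivity),
    Real.mul_rpow (by positivity) (by positivity)]
  congr 1
  rw [neg_div, Real.rpow_neg (by positivity), ← Real.inv_rpow (by positivity), inv_div,
    ← Real.sqrt_eq_rpow]

theorem gramA_extradiag_recurrence (T : ℝ) (hT : 0 < T) (m l : ℕ) (hm : 1 ≤ m)
    (hl : l ≤ m - 1) :
    gramA T (m - l - 1) (m + l + 1) =
      -Real.sqrt (((m : ℝ) - (l : ℝ)) / ((m : ℝ) + (l : ℝ) + 1)) *
        gramA T (m - l) (m + l) := by
  have hlm : l < m := by omega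
  set p := m - l with hp
  set q := m + l with hq
  have hp1 : 1 ≤ p := by omega
  have hcast1 : ((m : ℝ) - (l : ℝ)) = (p : ℝ) := by
    rw [hp]; push_cast [Nat.cast_sub hlm.le]; ring
  have hcast2 : ((m : ℝ) + (l : ℝ) + 1) = (q : ℝ) + 1 := by
    rw [hq]; push_cast; ring
  have hidx1 : m - l - 1 = p - 1 := by omega
  have hidx2 : m + l + 1 = q + 1 := by omega
  rw [hidx1, hidx2, hcast1, hcast2]
  rw [gramA_eq T (p - 1) (q + 1), gramA_eq T p q]
  have hkey := key_integral T hT (p - 1) q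
  rw [Nat.sub_add_cancel hp1] at hkey
  rw [hkey, dcoef_shift p q hp1]
  ring
end
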